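/- The IPW-plus-outcome-regression representation of the control-group trend among the treated is exact: E[ (A/P(A=1))·μ₀Δ(X) + ((1−A)/P(A=1))·(π_A(X)/(1−π_A(X)))·((Y₁−Y₀) − μ₀Δ(X)) ] = E[ E[Y₁ − Y₀ | A=0, X] | A=1 ], whenever either μ̄₀Δ = μ₀Δ (correct outcome model) or π̄_A = π_A (correct propensity model) is used in place of the true functions. -/

import Mathlib

open MeasureTheory
open scoped ENNReal NNReal

section helpers
variable {Ω 𝒳 : Type*} [MeasurableSpace Ω] [MeasurableSpace 𝒳]

lemma key_map_eq (P : Measure Ω) (X : Ω → 𝒳) (hX : Measurable X) (U V : Ω → ℝ)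
    (hU : Integrable U P) (hV : Integrable V P)
    (hU0 : 0 ≤ᵐ[P] U) (hV0 : 0 ≤ᵐ[P] V)
    (heq : ∀ s : Set 𝒳, MeasurableSet s →
      ∫ ω in X ⁻¹' s, U ω ∂P = ∫ ω in X ⁻¹' s, V ω ∂P) :
    (P.withDensity (fun ω => ENNReal.ofReal (U ω))).map X
      = (P.withDensity (fun ω => ENNReal.ofReal (V ω))).map X := by
  ext s hs
  rw [Measure.map_apply hX hs, Measure.map_apply hX hs,
    withDensity_apply _ (hX hs), withDensity_apply _ (hX hs),
    ← ofReal_integral_eq_lintegral_ofReal hU.restrict (ae_restrict_of_ae hU0),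
    ← ofReal_integral_eq_lintegral_ofReal hV.restrict (ae_restrict_of_ae hV0),
    heq s hs]

lemma integral_comp_mul_eq (P : Measure Ω) (X : Ω → 𝒳) (hX : Measurable X) (U V : Ω → ℝ)
    (hUm : AEMeasurable U P) (hVm : AEMeasurable V P)
    (hU : Integrable U P) (hV : Integrable V P)
    (hU0 : 0 ≤ᵐ[P] U) (hV0 : 0 ≤ᵐ[P] V)
    (heq : ∀ s : Set 𝒳, MeasurableSet s →
      ∫ ω in X ⁻¹' s, U ω ∂P = ∫ ω in X ⁻¹' s, V ω ∂P)
    (g : 𝒳 → ℝ) (hg : Measurable g) :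
    ∫ ω, g (X ω) * U ω ∂P = ∫ ω, g (X ω) * V ω ∂P := by
  have hmap := key_map_eq P X hX U V hU hV hU0 hV0 heq
  have hside : ∀ (W : Ω → ℝ), AEMeasurable W P → 0 ≤ᵐ[P] W →
      ∫ ω, g (X ω) * W ω ∂P
        = ∫ x, g x ∂((P.withDensity (fun ω => ENNReal.ofReal (W ω))).map X) := by
    intro W hWm hW0
    rw [integral_map hX.aemeasurable hg.aestronglyMeasurable]
    have h1 : (fun ω => ENNReal.ofReal (W ω)) = fun ω => ((W ω).toNNReal : ℝ≥0∞) := rfl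
    rw [h1, integral_withDensity_eq_integral_smul₀ hWm.real_toNNReal]
    refine integral_congr_ae ?_
    filter_upwards [hW0] with ω h0
    simp [NNReal.smul_def, Real.coe_toNNReal _ h0, mul_comm]
  rw [hside U hUm hU0, hside V hVm hV0, hmap]

lemma lintegral_comp_mul_eq (P : Measure Ω) (X : Ω → 𝒳) (hX : Measurable X) (U V : Ω → ℝ)
    (hUm : Measurable U) (hVm : Measurable V)
    (hU : Integrable U P) (hV : Integrable V P)
    (hU0 : 0 ≤ᵐ[P] U) (hV0 : 0 ≤ᵐ[P] V)
    (heq : ∀ s : Set 𝒳, MeasurableSet s →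
      ∫ ω in X ⁻¹' s, U ω ∂P = ∫ ω in X ⁻¹' s, V ω ∂P)
    (g : 𝒳 → ℝ≥0∞) (hg : Measurable g) :
    ∫⁻ ω, g (X ω) * ENNReal.ofReal (U ω) ∂P
      = ∫⁻ ω, g (X ω) * ENNReal.ofReal (V ω) ∂P := by
  have hmap := key_map_eq P X hX U V hU hV hU0 hV0 heq
  have hside : ∀ (W : Ω → ℝ), Measurable W →
      ∫⁻ ω, g (X ω) * ENNReal.ofReal (W ω) ∂P
        = ∫⁻ x, g x ∂((P.withDensity (fun ω => ENNReal.ofReal (W ω))).map X) := by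
    intro W hWm
    rw [lintegral_map hg hX]
    exact ((lintegral_withDensity_eq_lintegral_mul P hWm.ennreal_ofReal
      (hg.comp hX)).trans (lintegral_congr fun ω => mul_comm _ _)).symm
  rw [hside U hUm, hside V hVm, hmap]

lemma integral_comp_mul_zero (P : Measure Ω) (X : Ω → 𝒳) (hX : Measurable X) (Z : Ω → ℝ)
    (hZm : AEMeasurable Z P) (hZ : Integrable Z P)
    (heq : ∀ s : Set 𝒳, MeasurableSet s → ∫ ω in X ⁻¹' s, Z ω ∂P = 0)
    (g : 𝒳 → ℝ) (hg : Measurable g)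
    (hgZ : Integrable (fun ω => g (X ω) * Z ω) P) :
    ∫ ω, g (X ω) * Z ω ∂P = 0 := by
  set U : Ω → ℝ := fun ω => max (Z ω) 0 with hUdef
  set V : Ω → ℝ := fun ω => max (-Z ω) 0 with hVdef
  have hUV : ∀ ω, U ω - V ω = Z ω := fun ω => max_zero_sub_max_neg_zero_eq_self (Z ω)
  have hUint : Integrable U P := hZ.pos_part
  have hVint : Integrable V P := hZ.neg.pos_part
  have heq' : ∀ s : Set 𝒳, MeasurableSet s →
      ∫ ω in X ⁻¹' s, U ω ∂P = ∫ ω in X ⁻¹' s, V ω ∂P := by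
    intro s hs
    have h2 : ∫ ω in X ⁻¹' s, U ω ∂P - ∫ ω in X ⁻¹' s, V ω ∂P = 0 := by
      rw [← integral_sub hUint.restrict hVint.restrict]
      simp only [hUV]
      exact heq s hs
    linarith
  have hUm : AEMeasurable U P := hZm.max aemeasurable_const
  have hVm : AEMeasurable V P := hZm.neg.max aemeasurable_const
  have key := integral_comp_mul_eq P X hX U V hUm hVm hUint hVint
    (Filter.Eventually.of_forall fun ω => le_max_right _ _)
    (Filter.Eventually.of_forall fun ω => le_max_right _ _) heq' g hg
  have hgXm : AEMeasurable (fun ω => g (X ω)) P := (hg.comp hX).aemeasurable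
  have hbd : ∀ (W : Ω → ℝ), (∀ ω, |W ω| ≤ |Z ω|) → AEMeasurable W P →
      Integrable (fun ω => g (X ω) * W ω) P := by
    intro W hW hWm
    refine hgZ.mono ((hgXm.mul hWm).aestronglyMeasurable) ?_
    refine Filter.Eventually.of_forall fun ω => ?_
    simp only [Real.norm_eq_abs, abs_mul]
    exact mul_le_mul_of_nonneg_left (hW ω) (abs_nonneg _)
  have habs : ∀ z : ℝ, |max z 0| ≤ |z| := by
    intro z
    rw [abs_of_nonneg (le_max_right _ _)]
    exact max_le (le_abs_self _) (abs_nonneg _)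
  have hgU : Integrable (fun ω => g (X ω) * U ω) P := hbd U (fun ω => habs _) hUm
  have hgV : Integrable (fun ω => g (X ω) * V ω) P :=
    hbd V (fun ω => (habs _).trans_eq (abs_neg _)) hVm
  have hsplit : ∫ ω, g (X ω) * Z ω ∂P
      = ∫ ω, (g (X ω) * U ω - g (X ω) * V ω) ∂P := by
    refine integral_congr_ae (Filter.Eventually.of_forall fun ω => ?_)
    show g (X ω) * Z ω = g (X ω) * U ω - g (X ω) * V ω
    rw [← mul_sub, hUV]
  rw [hsplit, integral_sub hgU hgV, key, sub_self]

end helpers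

/-- **Double robustness of the control-trend component.**  With
`θ₀(μ̄,π̄) = E[(A/P(A=1))·μ̄(X) + ((1-A)/P(A=1))·(π̄(X)/(1-π̄(X)))·((Y₁-Y₀) - μ̄(X))]`,
if either the outcome model is correct (`μ̄ = μ₀Δ` with `μ₀Δ(X) = E[Y₁-Y₀|A=0,X]`) or the
propensity model is correct (`π̄ = π_A` with `π_A(X) = P(A=1|X)`), then
`θ₀(μ̄,π̄) = E[E[Y₁-Y₀|A=0,X] | A=1]`, the conditional expectation given the event `A=1`
being `E[μ₀Δ(X)·1{A=1}]/P(A=1)`. -/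
theorem double_robustness_control_component
    {Ω 𝒳 : Type*} [MeasurableSpace Ω] [MeasurableSpace 𝒳]
    (P : Measure Ω) [IsProbabilityMeasure P]
    (A : Ω → ℝ) (X : Ω → 𝒳) (Y0 Y1 : Ω → ℝ) (πA μ0Δ πb μb : 𝒳 → ℝ) (ε : ℝ)
    (hε : 0 < ε)
    (hA01 : ∀ ω, A ω = 0 ∨ A ω = 1)
    (hAmeas : Measurable A) (hXmeas : Measurable X)
    (hπmeas : Measurable πA) (hμmeas : Measurable μ0Δ)
    (hπbmeas : Measurable πb) (hμbmeas : Measurable μb)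
    (hPA : 0 < (P {ω | A ω = 1}).toReal)
    (hπbd : ∀ᵐ ω ∂P, ε ≤ πA (X ω) ∧ πA (X ω) < 1)
    (hπbbd : ∀ᵐ ω ∂P, ε ≤ πb (X ω) ∧ πb (X ω) < 1)
    (hμbbd : ∃ C : ℝ, ∀ x, |μb x| ≤ C)
    -- `π_A(X) = P(A=1 | X)`:
    (hπdef : ∀ s : Set 𝒳, MeasurableSet s →
      ∫ ω in {ω | X ω ∈ s}, A ω ∂P = ∫ ω in {ω | X ω ∈ s}, πA (X ω) ∂P)
    -- `μ₀Δ(X) = E[Y₁ - Y₀ | A = 0, X]`: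
    (hμdef : ∀ s : Set 𝒳, MeasurableSet s →
      ∫ ω in {ω | X ω ∈ s ∧ A ω = 0}, (Y1 ω - Y0 ω) ∂P
        = ∫ ω in {ω | X ω ∈ s ∧ A ω = 0}, μ0Δ (X ω) ∂P)
    (hint : Integrable (fun ω =>
      (A ω / (P {ω | A ω = 1}).toReal) * μb (X ω)
        + ((1 - A ω) / (P {ω | A ω = 1}).toReal) * (πb (X ω) / (1 - πb (X ω)))
          * ((Y1 ω - Y0 ω) - μb (X ω))) P)
    (hintμ0 : Integrable (fun ω => μ0Δ (X ω)) P)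
    -- at least one of the two candidate models is correct:
    (hcase : μb = μ0Δ ∨ πb = πA) :
    ∫ ω, ((A ω / (P {ω | A ω = 1}).toReal) * μb (X ω)
        + ((1 - A ω) / (P {ω | A ω = 1}).toReal) * (πb (X ω) / (1 - πb (X ω)))
          * ((Y1 ω - Y0 ω) - μb (X ω))) ∂P
      = (∫ ω in {ω | A ω = 1}, μ0Δ (X ω) ∂P) / (P {ω | A ω = 1}).toReal := by
  have hA1meas : MeasurableSet {ω | A ω = 1} := hAmeas (measurableSet_singleton 1)
  have hA0meas : MeasurableSet {ω | A ω = 0} := hAmeas (measurableSet_singleton 0)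
  set p := (P {ω | A ω = 1}).toReal with hpdef
  have hp' : p ≠ 0 := ne_of_gt hPA
  obtain ⟨C, hC⟩ := hμbbd
  have hAbd : ∀ ω, |A ω| ≤ 1 := by intro ω; rcases hA01 ω with h | h <;> simp [h]
  have hAint : Integrable A P :=
    (integrable_const (1:ℝ)).mono' hAmeas.aestronglyMeasurable
      (Filter.Eventually.of_forall fun ω => by simpa using hAbd ω)
  have hπAint : Integrable (fun ω => πA (X ω)) P :=
    (integrable_const (1:ℝ)).mono' (hπmeas.comp hXmeas).aestronglyMeasurable
      (by filter_upwards [hπbd] with ω h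
          rw [Real.norm_eq_abs, abs_of_nonneg (le_trans hε.le h.1)]; exact h.2.le)
  have hμbXint : Integrable (fun ω => μb (X ω)) P :=
    (integrable_const C).mono' (hμbmeas.comp hXmeas).aestronglyMeasurable
      (Filter.Eventually.of_forall fun ω => by simpa using hC (X ω))
  set F := fun ω => A ω * μb (X ω)
      + (1 - A ω) * (πb (X ω) / (1 - πb (X ω))) * ((Y1 ω - Y0 ω) - μb (X ω)) with hFdef
  have hFint : Integrable F P := by
    have key : ∀ a b c t : ℝ, p * (a / p * b + (1 - a) / p * c * t)
        = a * b + (1 - a) * c * t := by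
      intro a b c t; field_simp
    refine (hint.const_mul p).congr (Filter.Eventually.of_forall fun ω => ?_)
    simp only [hFdef]; exact key _ _ _ _
  have hI1 : Integrable (fun ω => A ω * μb (X ω)) P :=
    (integrable_const C).mono' (hAmeas.mul (hμbmeas.comp hXmeas)).aestronglyMeasurable
      (Filter.Eventually.of_forall fun ω => by
        rw [Real.norm_eq_abs, abs_mul]
        calc |A ω| * |μb (X ω)| ≤ 1 * C :=
              mul_le_mul (hAbd ω) (hC _) (abs_nonneg _) one_pos.le
          _ = C := one_mul C)
  have hI2 : Integrable (fun ω =>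
      (1 - A ω) * (πb (X ω) / (1 - πb (X ω))) * ((Y1 ω - Y0 ω) - μb (X ω))) P := by
    refine (hFint.sub hI1).congr (Filter.Eventually.of_forall fun ω => ?_)
    simp only [hFdef, Pi.sub_apply]; ring
  -- a.e.-measurability of (1-A)·((Y1-Y0) - μb(X))
  have hTm : AEMeasurable (fun ω => (1 - A ω) * ((Y1 ω - Y0 ω) - μb (X ω))) P := by
    have q : Measurable (fun ω => (1 - πb (X ω)) / πb (X ω)) :=
      (measurable_const.sub (hπbmeas.comp hXmeas)).div (hπbmeas.comp hXmeas)
    refine (q.aemeasurable.mul hI2.aemeasurable).congr ?_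
    filter_upwards [hπbbd] with ω h
    have h1 : πb (X ω) ≠ 0 := (lt_of_lt_of_le hε h.1).ne'
    have h2 : (1:ℝ) - πb (X ω) ≠ 0 := by have := h.2; intro hc; linarith
    rw [Pi.mul_apply]
    field_simp
  -- integrability of (1-A)·((Y1-Y0) - μb(X))
  have hZbnd : Integrable (fun ω => (1 - A ω) * ((Y1 ω - Y0 ω) - μb (X ω))) P := by
    refine Integrable.mono' (hI2.abs.const_mul (1/ε)) hTm.aestronglyMeasurable ?_
    filter_upwards [hπbbd] with ω h
    have h1 : 0 < πb (X ω) := lt_of_lt_of_le hε h.1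
    have h2 : 0 < 1 - πb (X ω) := by have := h.2; linarith
    have hhb : ε ≤ πb (X ω) / (1 - πb (X ω)) := by
      refine le_trans h.1 ?_
      rw [le_div_iff₀ h2]
      nlinarith [h1.le]
    rw [Real.norm_eq_abs, abs_mul]
    have e2 : |(1 - A ω) * (πb (X ω) / (1 - πb (X ω))) * ((Y1 ω - Y0 ω) - μb (X ω))|
        = |1 - A ω| * (πb (X ω) / (1 - πb (X ω))) * |(Y1 ω - Y0 ω) - μb (X ω)| := by
      rw [abs_mul, abs_mul, abs_of_nonneg (div_nonneg h1.le h2.le)]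
    rw [e2, one_div_mul_eq_div, le_div_iff₀ hε]
    have h3 : 0 ≤ |1 - A ω| * |(Y1 ω - Y0 ω) - μb (X ω)| := by positivity
    nlinarith [mul_le_mul_of_nonneg_left hhb h3]
  -- the "true" residual
  set ZΔ := fun ω => (1 - A ω) * ((Y1 ω - Y0 ω) - μ0Δ (X ω)) with hZΔdef
  have hdiffmeas : Measurable (fun ω => (1 - A ω) * (μb (X ω) - μ0Δ (X ω))) :=
    (measurable_const.sub hAmeas).mul ((hμbmeas.comp hXmeas).sub (hμmeas.comp hXmeas))
  have hdiffint : Integrable (fun ω => (1 - A ω) * (μb (X ω) - μ0Δ (X ω))) P := by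
    refine Integrable.mono' ((integrable_const C).add hintμ0.abs)
      hdiffmeas.aestronglyMeasurable (Filter.Eventually.of_forall fun ω => ?_)
    rw [Real.norm_eq_abs, abs_mul]
    have hA : |1 - A ω| ≤ 1 := by rcases hA01 ω with h | h <;> simp [h]
    calc |1 - A ω| * |μb (X ω) - μ0Δ (X ω)| ≤ 1 * |μb (X ω) - μ0Δ (X ω)| :=
          mul_le_mul_of_nonneg_right hA (abs_nonneg _)
      _ = |μb (X ω) - μ0Δ (X ω)| := one_mul _
      _ ≤ |μb (X ω)| + |μ0Δ (X ω)| := by simpa using norm_sub_le (μb (X ω)) (μ0Δ (X ω))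
      _ ≤ C + |μ0Δ (X ω)| := by have := hC (X ω); linarith
  have hZΔint : Integrable ZΔ P := by
    refine (hZbnd.add hdiffint).congr (Filter.Eventually.of_forall fun ω => ?_)
    simp only [hZΔdef, Pi.add_apply]; ring
  have hZΔm : AEMeasurable ZΔ P := by
    refine (hTm.add hdiffmeas.aemeasurable).congr
      (Filter.Eventually.of_forall fun ω => ?_)
    simp only [hZΔdef, Pi.add_apply]; ring
  -- E[(1-A)((Y1-Y0)-μ0Δ(X)) ; X ∈ s] = 0
  have hZΔeq : ∀ ω, ZΔ ω = ({ω | A ω = 0}.indicator (fun ω => Y1 ω - Y0 ω)) ω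
      - ({ω | A ω = 0}.indicator (fun ω => μ0Δ (X ω))) ω := by
    intro ω
    rcases hA01 ω with h | h
    · have hmem : ω ∈ {ω | A ω = 0} := h
      simp [hZΔdef, Set.indicator_of_mem hmem, h]
    · have hmem : ω ∉ {ω | A ω = 0} := by simp [Set.mem_setOf_eq, h]
      simp [hZΔdef, Set.indicator_of_notMem hmem, h]
  have hind2int : Integrable ({ω | A ω = 0}.indicator (fun ω => μ0Δ (X ω))) P :=
    hintμ0.indicator hA0meas
  have hind1int : Integrable ({ω | A ω = 0}.indicator (fun ω => Y1 ω - Y0 ω)) P := by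
    refine (hZΔint.add hind2int).congr (Filter.Eventually.of_forall fun ω => ?_)
    simp only [Pi.add_apply]
    rw [hZΔeq ω]; ring
  have heqZΔ : ∀ s : Set 𝒳, MeasurableSet s → ∫ ω in X ⁻¹' s, ZΔ ω ∂P = 0 := by
    intro s hs
    have e : ∫ ω in X ⁻¹' s, ZΔ ω ∂P
        = ∫ ω in X ⁻¹' s, ({ω | A ω = 0}.indicator (fun ω => Y1 ω - Y0 ω)) ω ∂P
          - ∫ ω in X ⁻¹' s, ({ω | A ω = 0}.indicator (fun ω => μ0Δ (X ω))) ω ∂P := by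
      rw [← integral_sub hind1int.restrict hind2int.restrict]
      exact integral_congr_ae (Filter.Eventually.of_forall fun ω => hZΔeq ω)
    rw [e, setIntegral_indicator hA0meas, setIntegral_indicator hA0meas]
    have h1 : ∫ ω in X ⁻¹' s ∩ {ω | A ω = 0}, (Y1 ω - Y0 ω) ∂P
        = ∫ ω in X ⁻¹' s ∩ {ω | A ω = 0}, μ0Δ (X ω) ∂P := hμdef s hs
    rw [h1, sub_self]
  -- reduce the goal
  have hgoal : ∫ ω, ((A ω / p) * μb (X ω)
        + ((1 - A ω) / p) * (πb (X ω) / (1 - πb (X ω)))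
          * ((Y1 ω - Y0 ω) - μb (X ω))) ∂P = p⁻¹ * ∫ ω, F ω ∂P := by
    rw [← integral_const_mul]
    refine integral_congr_ae (Filter.Eventually.of_forall fun ω => ?_)
    have key : ∀ a b c t : ℝ, a / p * b + (1 - a) / p * c * t
        = p⁻¹ * (a * b + (1 - a) * c * t) := by
      intro a b c t; field_simp
    simp only [hFdef]; exact key _ _ _ _
  have hAind : ∫ ω, A ω * μ0Δ (X ω) ∂P = ∫ ω in {ω | A ω = 1}, μ0Δ (X ω) ∂P := by
    rw [← integral_indicator hA1meas]
    refine integral_congr_ae (Filter.Eventually.of_forall fun ω => ?_)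
    rcases hA01 ω with h | h
    · have hmem : ω ∉ {ω | A ω = 1} := by simp [Set.mem_setOf_eq, h]
      simp [Set.indicator_of_notMem hmem, h]
    · have hmem : ω ∈ {ω | A ω = 1} := h
      simp [Set.indicator_of_mem hmem, h]
  have hsplitF : ∫ ω, F ω ∂P = ∫ ω, A ω * μb (X ω) ∂P
      + ∫ ω, (1 - A ω) * (πb (X ω) / (1 - πb (X ω))) * ((Y1 ω - Y0 ω) - μb (X ω)) ∂P := by
    rw [← integral_add hI1 hI2]
  suffices hS : ∫ ω, F ω ∂P = ∫ ω in {ω | A ω = 1}, μ0Δ (X ω) ∂P by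
    rw [hgoal, hS, div_eq_mul_inv, mul_comm]
  have hb_meas : Measurable (fun x => πb x / (1 - πb x)) :=
    hπbmeas.div (measurable_const.sub hπbmeas)
  rcases hcase with hcase | hcase
  · -- correct outcome model
    subst hcase
    have hzero : ∫ ω, (πb (X ω) / (1 - πb (X ω))) * ZΔ ω ∂P = 0 := by
      refine integral_comp_mul_zero P X hXmeas ZΔ hZΔm hZΔint heqZΔ _ hb_meas ?_
      refine hI2.congr (Filter.Eventually.of_forall fun ω => ?_)
      simp only [hZΔdef]; ring
    have h2 : ∫ ω, (1 - A ω) * (πb (X ω) / (1 - πb (X ω)))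
        * ((Y1 ω - Y0 ω) - μb (X ω)) ∂P = 0 := by
      rw [← hzero]
      exact integral_congr_ae (Filter.Eventually.of_forall fun ω => by
        simp only [hZΔdef]; ring)
    rw [hsplitF, h2, add_zero, hAind]
  · -- correct propensity model
    subst hcase
    -- auxiliary nonnegativity / integrability
    have h1A0 : 0 ≤ᵐ[P] (fun ω => 1 - A ω) :=
      Filter.Eventually.of_forall fun ω => by rcases hA01 ω with h | h <;> simp [h]
    have hA0 : 0 ≤ᵐ[P] A :=
      Filter.Eventually.of_forall fun ω => by rcases hA01 ω with h | h <;> simp [h]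
    have h1πint : Integrable (fun ω => 1 - πb (X ω)) P := (integrable_const 1).sub hπAint
    have h1Aint : Integrable (fun ω => 1 - A ω) P := (integrable_const 1).sub hAint
    have h1π0 : 0 ≤ᵐ[P] fun ω => 1 - πb (X ω) := by
      filter_upwards [hπbd] with ω h; have := h.2; simp; linarith
    have hπ0 : 0 ≤ᵐ[P] fun ω => πb (X ω) := by
      filter_upwards [hπbd] with ω h; exact le_trans hε.le h.1
    have heqπ : ∀ s : Set 𝒳, MeasurableSet s →
        ∫ ω in X ⁻¹' s, A ω ∂P = ∫ ω in X ⁻¹' s, πb (X ω) ∂P := fun s hs => hπdef s hs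
    have heq1π : ∀ s : Set 𝒳, MeasurableSet s →
        ∫ ω in X ⁻¹' s, (1 - A ω) ∂P = ∫ ω in X ⁻¹' s, (1 - πb (X ω)) ∂P := by
      intro s hs
      rw [integral_sub (integrable_const 1).restrict hAint.restrict,
        integral_sub (integrable_const 1).restrict hπAint.restrict, heqπ s hs]
    set k : 𝒳 → ℝ := fun x => (πb x / (1 - πb x)) * (μ0Δ x - μb x) with hkdef
    have hkmeas : Measurable k :=
      (hπmeas.div (measurable_const.sub hπmeas)).mul (hμmeas.sub hμbmeas)
    have hdXint : Integrable (fun ω => μ0Δ (X ω) - μb (X ω)) P := hintμ0.sub hμbXint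
    -- integrability of (1-A)·k(X) via the tower property at the lintegral level
    have hkint : Integrable (fun ω => (1 - A ω) * k (X ω)) P := by
      refine ⟨((measurable_const.sub hAmeas).mul
        (hkmeas.comp hXmeas)).aestronglyMeasurable, ?_⟩
      have hlint := lintegral_comp_mul_eq P X hXmeas _ _
        (measurable_const.sub hAmeas) (measurable_const.sub (hπmeas.comp hXmeas))
        h1Aint h1πint h1A0 h1π0 heq1π (fun x => (‖k x‖₊ : ℝ≥0∞)) hkmeas.nnnorm.coe_nnreal_ennreal
      have e1 : ∫⁻ ω, (‖(1 - A ω) * k (X ω)‖₊ : ℝ≥0∞) ∂P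
          = ∫⁻ ω, (‖k (X ω)‖₊ : ℝ≥0∞) * ENNReal.ofReal (1 - A ω) ∂P := by
        refine lintegral_congr fun ω => ?_
        rw [nnnorm_mul, ENNReal.coe_mul, mul_comm]
        congr 1
        rw [← enorm_eq_nnnorm, Real.enorm_eq_ofReal]
        rcases hA01 ω with h | h <;> simp [h]
      have e2 : ∫⁻ ω, (‖k (X ω)‖₊ : ℝ≥0∞) * ENNReal.ofReal (1 - πb (X ω)) ∂P
          ≤ ∫⁻ ω, (‖μ0Δ (X ω) - μb (X ω)‖₊ : ℝ≥0∞) ∂P := by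
        refine lintegral_mono_ae ?_
        filter_upwards [hπbd] with ω h
        have h1 : 0 < πb (X ω) := lt_of_lt_of_le hε h.1
        have h2 : 0 < 1 - πb (X ω) := by have := h.2; linarith
        rw [← enorm_eq_nnnorm, ← enorm_eq_nnnorm, Real.enorm_eq_ofReal_abs, Real.enorm_eq_ofReal_abs,
          ← ENNReal.ofReal_mul (abs_nonneg _)]
        refine ENNReal.ofReal_le_ofReal ?_
        have e3 : |k (X ω)| * (1 - πb (X ω)) = πb (X ω) * |μ0Δ (X ω) - μb (X ω)| := by
          simp only [hkdef]
          rw [abs_mul, abs_of_nonneg (div_nonneg h1.le h2.le)]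
          field_simp
        rw [e3]
        calc πb (X ω) * |μ0Δ (X ω) - μb (X ω)| ≤ 1 * |μ0Δ (X ω) - μb (X ω)| :=
              mul_le_mul_of_nonneg_right h.2.le (abs_nonneg _)
          _ = _ := one_mul _
      show HasFiniteIntegral _ P
      rw [hasFiniteIntegral_def]
      calc ∫⁻ ω, (‖(1 - A ω) * k (X ω)‖₊ : ℝ≥0∞) ∂P
          = ∫⁻ ω, (‖k (X ω)‖₊ : ℝ≥0∞) * ENNReal.ofReal (1 - A ω) ∂P := e1
        _ = ∫⁻ ω, (‖k (X ω)‖₊ : ℝ≥0∞) * ENNReal.ofReal (1 - πb (X ω)) ∂P := hlint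
        _ ≤ ∫⁻ ω, (‖μ0Δ (X ω) - μb (X ω)‖₊ : ℝ≥0∞) ∂P := e2
        _ < ⊤ := hdXint.hasFiniteIntegral
    -- E[(1-A)k(X)] = E[A(μ0Δ(X)-μb(X))]
    have hπkint : Integrable (fun ω => (1 - πb (X ω)) * k (X ω)) P := by
      refine Integrable.mono' hdXint.abs
        ((measurable_const.sub (hπmeas.comp hXmeas)).mul
          (hkmeas.comp hXmeas)).aestronglyMeasurable ?_
      filter_upwards [hπbd] with ω h
      have h1 : 0 < πb (X ω) := lt_of_lt_of_le hε h.1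
      have h2 : 0 < 1 - πb (X ω) := by have := h.2; linarith
      rw [Real.norm_eq_abs, abs_mul, abs_of_nonneg h2.le]
      have e3 : (1 - πb (X ω)) * |k (X ω)| = πb (X ω) * |μ0Δ (X ω) - μb (X ω)| := by
        simp only [hkdef]
        rw [abs_mul, abs_of_nonneg (div_nonneg h1.le h2.le)]
        field_simp
      rw [e3]
      calc πb (X ω) * |μ0Δ (X ω) - μb (X ω)| ≤ 1 * |μ0Δ (X ω) - μb (X ω)| :=
            mul_le_mul_of_nonneg_right h.2.le (abs_nonneg _)
        _ = |μ0Δ (X ω) - μb (X ω)| := one_mul _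
    have hB1 : ∫ ω, (1 - A ω) * k (X ω) ∂P = ∫ ω, (1 - πb (X ω)) * k (X ω) ∂P := by
      have := integral_comp_mul_eq P X hXmeas _ _
        (measurable_const.sub hAmeas).aemeasurable
        (measurable_const.sub (hπmeas.comp hXmeas)).aemeasurable
        h1Aint h1πint h1A0 h1π0 heq1π k hkmeas
      calc ∫ ω, (1 - A ω) * k (X ω) ∂P = ∫ ω, k (X ω) * (1 - A ω) ∂P :=
            integral_congr_ae (Filter.Eventually.of_forall fun ω => mul_comm _ _)
        _ = ∫ ω, k (X ω) * (1 - πb (X ω)) ∂P := this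
        _ = ∫ ω, (1 - πb (X ω)) * k (X ω) ∂P :=
            integral_congr_ae (Filter.Eventually.of_forall fun ω => mul_comm _ _)
    have hB2 : ∫ ω, (1 - πb (X ω)) * k (X ω) ∂P
        = ∫ ω, πb (X ω) * (μ0Δ (X ω) - μb (X ω)) ∂P := by
      refine integral_congr_ae ?_
      filter_upwards [hπbd] with ω h
      have h1 : 0 < πb (X ω) := lt_of_lt_of_le hε h.1
      have h2 : (1:ℝ) - πb (X ω) ≠ 0 := by have := h.2; intro hc; linarith
      simp only [hkdef]
      field_simp
    have hB3 : ∫ ω, πb (X ω) * (μ0Δ (X ω) - μb (X ω)) ∂P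
        = ∫ ω, A ω * (μ0Δ (X ω) - μb (X ω)) ∂P := by
      have := integral_comp_mul_eq P X hXmeas A (fun ω => πb (X ω))
        hAmeas.aemeasurable (hπmeas.comp hXmeas).aemeasurable hAint hπAint
        hA0 hπ0 heqπ (fun x => μ0Δ x - μb x) (hμmeas.sub hμbmeas)
      calc ∫ ω, πb (X ω) * (μ0Δ (X ω) - μb (X ω)) ∂P
          = ∫ ω, (μ0Δ (X ω) - μb (X ω)) * πb (X ω) ∂P :=
            integral_congr_ae (Filter.Eventually.of_forall fun ω => mul_comm _ _)
        _ = ∫ ω, (μ0Δ (X ω) - μb (X ω)) * A ω ∂P := this.symm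
        _ = ∫ ω, A ω * (μ0Δ (X ω) - μb (X ω)) ∂P :=
            integral_congr_ae (Filter.Eventually.of_forall fun ω => mul_comm _ _)
    -- E[(πb/(1-πb))(X)·ZΔ] = 0
    have hbZint : Integrable (fun ω => (πb (X ω) / (1 - πb (X ω))) * ZΔ ω) P := by
      refine (hI2.sub hkint).congr (Filter.Eventually.of_forall fun ω => ?_)
      simp only [hZΔdef, hkdef, Pi.sub_apply]; ring
    have hC0 : ∫ ω, (πb (X ω) / (1 - πb (X ω))) * ZΔ ω ∂P = 0 :=
      integral_comp_mul_zero P X hXmeas ZΔ hZΔm hZΔint heqZΔ _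
        (hπmeas.div (measurable_const.sub hπmeas)) hbZint
    -- assemble
    have hAdint : Integrable (fun ω => A ω * (μ0Δ (X ω) - μb (X ω))) P := by
      refine Integrable.mono' hdXint.abs
        (hAmeas.mul ((hμmeas.comp hXmeas).sub (hμbmeas.comp hXmeas))).aestronglyMeasurable
        (Filter.Eventually.of_forall fun ω => ?_)
      rw [Real.norm_eq_abs, abs_mul]
      calc |A ω| * |μ0Δ (X ω) - μb (X ω)| ≤ 1 * |μ0Δ (X ω) - μb (X ω)| :=
            mul_le_mul_of_nonneg_right (hAbd ω) (abs_nonneg _)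
        _ = |μ0Δ (X ω) - μb (X ω)| := one_mul _
    have hsecond : ∫ ω, (1 - A ω) * (πb (X ω) / (1 - πb (X ω)))
        * ((Y1 ω - Y0 ω) - μb (X ω)) ∂P
        = ∫ ω, A ω * (μ0Δ (X ω) - μb (X ω)) ∂P := by
      have hsplit2 : ∫ ω, (1 - A ω) * (πb (X ω) / (1 - πb (X ω)))
          * ((Y1 ω - Y0 ω) - μb (X ω)) ∂P
          = ∫ ω, (πb (X ω) / (1 - πb (X ω))) * ZΔ ω ∂P
            + ∫ ω, (1 - A ω) * k (X ω) ∂P := by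
        rw [← integral_add hbZint hkint]
        refine integral_congr_ae (Filter.Eventually.of_forall fun ω => ?_)
        simp only [hZΔdef, hkdef]; ring
      rw [hsplit2, hC0, zero_add, hB1, hB2, hB3]
    have hfirst : ∫ ω, A ω * μb (X ω) ∂P + ∫ ω, A ω * (μ0Δ (X ω) - μb (X ω)) ∂P
        = ∫ ω, A ω * μ0Δ (X ω) ∂P := by
      rw [← integral_add hI1 hAdint]
      refine integral_congr_ae (Filter.Eventually.of_forall fun ω => ?_)
      ring
    rw [hsplitF, hsecond, hfirst, hAind]
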